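/- Let (X,W) be a good pair with W nonempty. Then mspd_k(X,W) equals the minimum over all sets Y ⊆ X ∪ W with Y ≠ X, |Y| ≤ k+1, and W ∩ N(X \ Y) = ∅ of 1 + mspd_k(Y, W \ Y). Moreover, if |X| ≤ k+1 then mspd_k(X, ∅) = 1. -/

import Mathlib

variable {V : Type*}

/-- The neighborhood of a set `S`: vertices outside `S` adjacent to some vertex of `S`. -/
def neighborhood (G : SimpleGraph V) (S : Set V) : Set V :=
  {v | v ∉ S ∧ ∃ u ∈ S, G.Adj u v}

/-- `bags : Fin s → Finset V` is a path decomposition of the subgraph of `G` induced on `S`: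
the bags lie in `S`, cover all vertices of `S` and all edges of `G` inside `S`, and every
vertex occurs in a contiguous interval of bags. -/
def IsPathDecomp (G : SimpleGraph V) (S : Set V) {s : ℕ} (bags : Fin s → Finset V) : Prop :=
  (∀ i, ↑(bags i) ⊆ S) ∧
  (∀ v ∈ S, ∃ i, v ∈ bags i) ∧
  (∀ v ∈ S, ∀ w ∈ S, G.Adj v w → ∃ i, v ∈ bags i ∧ w ∈ bags i) ∧
  (∀ (v : V) (i j l : Fin s), i ≤ j → j ≤ l → v ∈ bags i → v ∈ bags l → v ∈ bags j)

/-- `(X, W)` is a good pair: `|X| ≤ k+1`, `X` and `W` are disjoint, and every vertex of `W`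
has all its neighbors in `W ∪ X`. -/
def GoodPair [DecidableEq V] (G : SimpleGraph V) (k : ℕ) (X W : Finset V) : Prop :=
  X.card ≤ k + 1 ∧ Disjoint X W ∧ ∀ v ∈ W, ∀ u, G.Adj v u → u ∈ W ∪ X
/-- The minimum size (as an extended natural, `⊤` if none exists) of a path decomposition of
`G[X ∪ W]` of width at most `k` whose last bag is exactly `X`. -/
noncomputable def mspd [DecidableEq V] (G : SimpleGraph V) (k : ℕ) (X W : Finset V) : ℕ∞ :=
  sInf {m : ℕ∞ | ∃ (s : ℕ) (bags : Fin s → Finset V), m = s ∧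
    IsPathDecomp G ↑(X ∪ W) bags ∧ (∀ i, (bags i).card ≤ k + 1) ∧
    ∃ h : 0 < s, bags ⟨s - 1, Nat.sub_lt h Nat.one_pos⟩ = X}

/-- Appending the bag `X` to a decomposition of `G[Y ∪ (W\Y)]` ending in `Y`. -/
lemma mspd_append [DecidableEq V] (G : SimpleGraph V) (k : ℕ) (X W Y : Finset V)
    (hgp : GoodPair G k X W) (hYsub : Y ⊆ X ∪ W)
    (hN : (↑W : Set V) ∩ neighborhood G ↑(X \ Y) = ∅)
    (s : ℕ) (bags : Fin s → Finset V)
    (hpd : IsPathDecomp G ↑(Y ∪ (W \ Y)) bags)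
    (hw : ∀ i, (bags i).card ≤ k + 1) (hs : 0 < s)
    (hlast : bags ⟨s - 1, Nat.sub_lt hs Nat.one_pos⟩ = Y) :
    mspd G k X W ≤ (s : ℕ∞) + 1 := by
  obtain ⟨hXcard, hdisj, _⟩ := hgp
  rw [Finset.union_sdiff_self_eq_union] at hpd
  obtain ⟨hsub, hcov, hedge, hcont⟩ := hpd
  set nb : Fin (s+1) → Finset V := fun i => if h : (i : ℕ) < s then bags ⟨i, h⟩ else X with hnb
  have hYXW : ∀ v ∈ Y, v ∈ X ∪ W := fun v hv => hYsub hv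
  have hnoedge : ∀ v ∈ W, ∀ u ∈ X, u ∉ Y → ¬ G.Adj u v := by
    intro v hv u huX huY hadj
    have hvX : v ∉ X := fun h => (Finset.disjoint_left.1 hdisj h) hv
    have : v ∈ (↑W : Set V) ∩ neighborhood G ↑(X \ Y) := by
      refine ⟨hv, ?_, ⟨u, ?_, hadj⟩⟩
      · simp only [Finset.coe_sdiff, Set.mem_diff, Finset.mem_coe]
        intro h; exact hvX h.1
      · simp only [Finset.coe_sdiff, Set.mem_diff, Finset.mem_coe]
        exact ⟨huX, huY⟩
    rw [hN] at this; exact this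
  have key : mspd G k X W ≤ ((s+1 : ℕ) : ℕ∞) := by
    apply sInf_le
    refine ⟨s+1, nb, rfl, ⟨?_, ?_, ?_, ?_⟩, ?_, Nat.succ_pos s, ?_⟩
    · -- bags inside X ∪ W
      intro i v hv
      simp only [hnb] at hv
      split_ifs at hv with h
      · have := hsub _ hv
        simp only [Finset.coe_union, Set.mem_union, Finset.mem_coe] at this ⊢
        rcases this with h' | h'
        · rcases Finset.mem_union.1 (hYXW _ h') with h'' | h'' <;> [exact Or.inl h''; exact Or.inr h'']
        · exact Or.inr h'
      · simp only [Finset.coe_union, Set.mem_union, Finset.mem_coe]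
        exact Or.inl hv
    · -- cover
      intro v hv
      simp only [Finset.coe_union, Set.mem_union, Finset.mem_coe] at hv
      rcases hv with hv | hv
      · refine ⟨Fin.last s, ?_⟩
        simp only [hnb, Fin.last]
        rw [dif_neg (lt_irrefl s)]; exact hv
      · by_cases hvY : v ∈ Y
        · obtain ⟨i, hi⟩ := hcov v (by simp [hvY])
          exact ⟨⟨i, i.isLt.trans (Nat.lt_succ_self s)⟩, by simp [hnb, i.isLt, hi]⟩
        · obtain ⟨i, hi⟩ := hcov v (by simp [hv, hvY])
          exact ⟨⟨i, i.isLt.trans (Nat.lt_succ_self s)⟩, by simp [hnb, i.isLt, hi]⟩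
    · -- edges
      intro v hv w hw' hadj
      simp only [Finset.coe_union, Set.mem_union, Finset.mem_coe] at hv hw'
      have mem_old : ∀ u, u ∈ W ∨ u ∈ Y → u ∈ (↑(Y ∪ W) : Set V) := by
        intro u hu
        simp only [Finset.coe_union, Set.mem_union, Finset.mem_coe]
        tauto
      have lift : (∃ i, v ∈ bags i ∧ w ∈ bags i) → ∃ i, v ∈ nb i ∧ w ∈ nb i := by
        rintro ⟨i, h1, h2⟩
        exact ⟨⟨i, i.isLt.trans (Nat.lt_succ_self s)⟩, by simp [hnb, i.isLt, h1, h2]⟩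
      rcases hv with hv | hv <;> rcases hw' with hw' | hw'
      · -- both in X: last bag
        refine ⟨Fin.last s, ?_, ?_⟩ <;>
          · simp only [hnb, Fin.last]; rw [dif_neg (lt_irrefl s)]; assumption
      · -- v ∈ X, w ∈ W
        by_cases hvY : v ∈ Y
        · exact lift (hedge v (mem_old v (Or.inr hvY)) w (mem_old w (Or.inl hw')) hadj)
        · exact absurd hadj (hnoedge w hw' v hv hvY)
      · -- v ∈ W, w ∈ X
        by_cases hwY : w ∈ Y
        · exact lift (hedge v (mem_old v (Or.inl hv)) w (mem_old w (Or.inr hwY)) hadj)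
        · exact absurd hadj.symm (hnoedge v hv w hw' hwY)
      · exact lift (hedge v (mem_old v (Or.inl hv)) w (mem_old w (Or.inl hw')) hadj)
    · -- contiguity
      intro v i j l hij hjl hvi hvl
      simp only [hnb] at hvi hvl ⊢
      by_cases hl : (l : ℕ) < s
      · have hj : (j : ℕ) < s := lt_of_le_of_lt hjl hl
        have hi : (i : ℕ) < s := lt_of_le_of_lt hij hj
        rw [dif_pos hi] at hvi
        rw [dif_pos hl] at hvl
        rw [dif_pos hj]
        exact hcont v ⟨i, hi⟩ ⟨j, hj⟩ ⟨l, hl⟩ hij hjl hvi hvl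
      · rw [dif_neg hl] at hvl
        by_cases hj : (j : ℕ) < s
        · have hi : (i : ℕ) < s := lt_of_le_of_lt hij hj
          rw [dif_pos hi] at hvi
          rw [dif_pos hj]
          -- v ∈ X and v is in an old bag, hence v ∈ Y (old last bag)
          have hvYW : v ∈ (↑(Y ∪ W) : Set V) := hsub _ hvi
          have hvY : v ∈ Y := by
            simp only [Finset.coe_union, Set.mem_union, Finset.mem_coe] at hvYW
            rcases hvYW with h | h
            · exact h
            · exact absurd hvl (fun hx => (Finset.disjoint_left.1 hdisj hx) h)
          have hvlast : v ∈ bags ⟨s - 1, Nat.sub_lt hs Nat.one_pos⟩ := hlast ▸ hvY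
          exact hcont v ⟨i, hi⟩ ⟨j, hj⟩ ⟨s-1, Nat.sub_lt hs Nat.one_pos⟩ hij
            (by simpa using Nat.le_sub_one_of_lt hj) hvi hvlast
        · rw [dif_neg hj]; exact hvl
    · intro i
      simp only [hnb]
      split_ifs with h
      · exact hw _
      · exact hXcard
    · show nb ⟨s + 1 - 1, _⟩ = X
      simp only [hnb, Nat.add_sub_cancel]
      rw [dif_neg (lt_irrefl s)]
  calc mspd G k X W ≤ ((s+1 : ℕ) : ℕ∞) := key
    _ = (s : ℕ∞) + 1 := by push_cast; ring

/-- Extracting one step of the recurrence: any decomposition of `G[X ∪ W]` ending in `X`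
yields some `Y` with the required properties and a shorter decomposition. -/
lemma mspd_extract [DecidableEq V] (G : SimpleGraph V) (k : ℕ) (X W : Finset V)
    (hgp : GoodPair G k X W) (hW : W ≠ ∅) :
    ∀ s : ℕ, ∀ bags : Fin s → Finset V, IsPathDecomp G ↑(X ∪ W) bags →
      (∀ i, (bags i).card ≤ k + 1) → ∀ hs : 0 < s,
      bags ⟨s - 1, Nat.sub_lt hs Nat.one_pos⟩ = X →
      sInf {m : ℕ∞ | ∃ Y : Finset V, Y ⊆ X ∪ W ∧ Y ≠ X ∧ Y.card ≤ k + 1 ∧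
        (↑W : Set V) ∩ neighborhood G ↑(X \ Y) = ∅ ∧ m = 1 + mspd G k Y (W \ Y)} ≤ (s : ℕ∞) := by
  obtain ⟨hXcard, hdisj, _⟩ := hgp
  intro s
  induction s using Nat.strong_induction_on with
  | _ s IH =>
  intro bags hpd hw hs hlast
  obtain ⟨hsub, hcov, hedge, hcont⟩ := hpd
  -- every element of W appears in a bag of index < s - 1
  have hWbag : ∀ v ∈ W, ∃ i : Fin s, (i : ℕ) < s - 1 ∧ v ∈ bags i := by
    intro v hv
    have hvX : v ∉ X := fun h => (Finset.disjoint_left.1 hdisj h) hv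
    obtain ⟨i, hi⟩ := hcov v (by simp [hv])
    refine ⟨i, ?_, hi⟩
    rcases Nat.lt_or_ge (i : ℕ) (s - 1) with h | h
    · exact h
    · exfalso
      have : (i : ℕ) = s - 1 := le_antisymm (Nat.le_sub_one_of_lt i.isLt) h
      have : i = (⟨s - 1, Nat.sub_lt hs Nat.one_pos⟩ : Fin s) := Fin.ext this
      rw [this, hlast] at hi
      exact hvX hi
  have h2 : 2 ≤ s := by
    obtain ⟨v, hv⟩ := Finset.nonempty_iff_ne_empty.2 hW
    obtain ⟨i, hi, _⟩ := hWbag v hv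
    omega
  have hs2 : s - 2 < s := by omega
  have hs21 : s - 2 < s - 1 := by omega
  set Y : Finset V := bags ⟨s - 2, hs2⟩ with hYdef
  -- vertices of X appearing in an early bag lie in Y
  have hXY : ∀ v ∈ X, ∀ i : Fin s, (i : ℕ) ≤ s - 2 → v ∈ bags i → v ∈ Y := by
    intro v hv i hile hvi
    have hvlast : v ∈ bags ⟨s - 1, Nat.sub_lt hs Nat.one_pos⟩ := hlast ▸ hv
    exact hcont v i ⟨s - 2, hs2⟩ ⟨s - 1, Nat.sub_lt hs Nat.one_pos⟩ hile (by simp; omega) hvi hvlast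
  -- the truncated decomposition
  set tb : Fin (s - 1) → Finset V :=
    fun i => bags ⟨i, lt_of_lt_of_le i.isLt (Nat.sub_le s 1)⟩ with htb
  have htbcont : ∀ (v : V) (i j l : Fin (s-1)), i ≤ j → j ≤ l → v ∈ tb i → v ∈ tb l → v ∈ tb j := by
    intro v i j l hij hjl hvi hvl
    exact hcont v ⟨i, _⟩ ⟨j, _⟩ ⟨l, _⟩ hij hjl hvi hvl
  have htblast : tb ⟨s - 1 - 1, Nat.sub_lt (by omega) Nat.one_pos⟩ = Y := rfl
  by_cases hYX : Y = X
  · -- drop the duplicated last bag and induct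
    refine (IH (s - 1) (by omega) tb ⟨fun i => hsub _, ?_, ?_, htbcont⟩ (fun i => hw _) (by omega)
      (htblast.trans hYX)).trans (Nat.cast_le.2 (Nat.sub_le s 1))
    · intro v hv
      have hv' := hv
      simp only [Finset.coe_union, Set.mem_union, Finset.mem_coe] at hv'
      rcases hv' with hv' | hv'
      · exact ⟨⟨s - 2, hs21⟩, by rw [htb]; show v ∈ bags ⟨s-2, _⟩; rw [← hYdef, hYX]; exact hv'⟩
      · obtain ⟨i, hilt, hi⟩ := hWbag v hv'
        exact ⟨⟨i, hilt⟩, by simpa [htb] using hi⟩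
    · intro v hv w hw' hadj
      obtain ⟨i, hvi, hwi⟩ := hedge v hv w hw' hadj
      rcases Nat.lt_or_ge (i : ℕ) (s - 1) with h | h
      · exact ⟨⟨i, h⟩, by simpa [htb] using hvi, by simpa [htb] using hwi⟩
      · have hieq : i = (⟨s - 1, Nat.sub_lt hs Nat.one_pos⟩ : Fin s) :=
          Fin.ext (le_antisymm (Nat.le_sub_one_of_lt i.isLt) h)
        rw [hieq, hlast] at hvi hwi
        refine ⟨⟨s - 2, hs21⟩, ?_, ?_⟩ <;>
          · show _ ∈ bags ⟨s-2, _⟩; rw [← hYdef, hYX]; assumption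
  · -- use Y as the next separator
    have hYsub : Y ⊆ X ∪ W := by
      intro v hv
      have := hsub ⟨s - 2, hs2⟩ (by exact hv)
      simpa using this
    have hN : (↑W : Set V) ∩ neighborhood G ↑(X \ Y) = ∅ := by
      ext v
      simp only [Set.mem_inter_iff, Set.mem_empty_iff_false, iff_false, not_and]
      intro hvW hvN
      obtain ⟨-, u, huXY, hadj⟩ := hvN
      simp only [Finset.coe_sdiff, Set.mem_diff, Finset.mem_coe] at huXY
      obtain ⟨huX, huY⟩ := huXY
      obtain ⟨i, hui, hvi⟩ := hedge u (by simp [huX]) v (by simp [Finset.mem_coe.2 hvW]) hadj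
      have hine : (i : ℕ) ≠ s - 1 := by
        intro h
        have : i = (⟨s - 1, Nat.sub_lt hs Nat.one_pos⟩ : Fin s) := Fin.ext h
        rw [this, hlast] at hvi
        exact (Finset.disjoint_left.1 hdisj hvi) hvW
      exact huY (hXY u huX i (by have := i.isLt; omega) hui)
    -- tb is a decomposition of G[Y ∪ (W \ Y)]
    have hmem' : ∀ u, u ∈ (↑(Y ∪ W \ Y) : Set V) ↔ (u ∈ Y ∨ u ∈ W) := by
      intro u
      simp only [Finset.coe_union, Set.mem_union, Finset.mem_coe, Finset.coe_sdiff,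
        Set.mem_diff, Finset.mem_sdiff]
      by_cases h : u ∈ Y <;> tauto
    have hpd' : IsPathDecomp G ↑(Y ∪ W \ Y) tb := by
      refine ⟨?_, ?_, ?_, htbcont⟩
      · intro i v hv
        rw [hmem']
        have hi' : ((⟨i, lt_of_lt_of_le i.isLt (Nat.sub_le s 1)⟩ : Fin s) : ℕ) ≤ s - 2 := by
          have := i.isLt; simp; omega
        have := hsub _ hv
        simp only [Finset.coe_union, Set.mem_union, Finset.mem_coe] at this
        rcases this with h | h
        · exact Or.inl (hXY v h _ hi' hv)
        · exact Or.inr h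
      · intro v hv
        rw [hmem'] at hv
        rcases hv with hv | hv
        · exact ⟨⟨s - 2, hs21⟩, by rw [htb]; exact hv⟩
        · obtain ⟨i, hilt, hi⟩ := hWbag v hv
          exact ⟨⟨i, hilt⟩, by simpa [htb] using hi⟩
      · intro v hv w hw' hadj
        rw [hmem'] at hv hw'
        have hXW : ∀ u, (u ∈ Y ∨ u ∈ W) → u ∈ (↑(X ∪ W) : Set V) := by
          intro u hu
          simp only [Finset.coe_union, Set.mem_union, Finset.mem_coe]
          rcases hu with hu | hu
          · rcases Finset.mem_union.1 (hYsub hu) with h | h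
            · exact Or.inl h
            · exact Or.inr h
          · exact Or.inr hu
        obtain ⟨i, hvi, hwi⟩ := hedge v (hXW v hv) w (hXW w hw') hadj
        rcases Nat.lt_or_ge (i : ℕ) (s - 1) with h | h
        · exact ⟨⟨i, h⟩, by simpa [htb] using hvi, by simpa [htb] using hwi⟩
        · have hieq : i = (⟨s - 1, Nat.sub_lt hs Nat.one_pos⟩ : Fin s) :=
            Fin.ext (le_antisymm (Nat.le_sub_one_of_lt i.isLt) h)
          rw [hieq, hlast] at hvi hwi
          have hvy : v ∈ Y := by
            rcases hv with h' | h'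
            · exact h'
            · exact absurd hvi fun hx => (Finset.disjoint_left.1 hdisj hx) h'
          have hwy : w ∈ Y := by
            rcases hw' with h' | h'
            · exact h'
            · exact absurd hwi fun hx => (Finset.disjoint_left.1 hdisj hx) h'
          exact ⟨⟨s - 2, hs21⟩, hvy, hwy⟩
    have hmspdY : mspd G k Y (W \ Y) ≤ ((s - 1 : ℕ) : ℕ∞) := by
      apply sInf_le
      exact ⟨s - 1, tb, rfl, hpd', fun i => hw _, by omega, htblast⟩
    have hmemset : (1 + mspd G k Y (W \ Y)) ∈ {m : ℕ∞ | ∃ Y : Finset V, Y ⊆ X ∪ W ∧ Y ≠ X ∧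
        Y.card ≤ k + 1 ∧ (↑W : Set V) ∩ neighborhood G ↑(X \ Y) = ∅ ∧
        m = 1 + mspd G k Y (W \ Y)} :=
      ⟨Y, hYsub, hYX, hw ⟨s - 2, hs2⟩, hN, rfl⟩
    refine le_trans (sInf_le hmemset) ?_
    calc (1 : ℕ∞) + mspd G k Y (W \ Y) ≤ 1 + ((s - 1 : ℕ) : ℕ∞) := add_le_add_right hmspdY 1
      _ = ((1 + (s - 1) : ℕ) : ℕ∞) := by push_cast; ring
      _ = (s : ℕ∞) := by congr 1; omega

/-- The recurrence for `mspd`: for a good pair `(X, W)` with `W` nonempty, `mspd_k(X, W)` is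
the minimum over all `Y ⊆ X ∪ W` with `Y ≠ X`, `|Y| ≤ k+1` and `W ∩ N(X \ Y) = ∅` of
`1 + mspd_k(Y, W \ Y)`; moreover `mspd_k(X', ∅) = 1` whenever `|X'| ≤ k+1`. -/
theorem mspd_recurrence [DecidableEq V] (G : SimpleGraph V) (k : ℕ) (X W : Finset V)
    (hgp : GoodPair G k X W) (hW : W ≠ ∅) :
    mspd G k X W = sInf {m : ℕ∞ | ∃ Y : Finset V, Y ⊆ X ∪ W ∧ Y ≠ X ∧ Y.card ≤ k + 1 ∧
        (↑W : Set V) ∩ neighborhood G ↑(X \ Y) = ∅ ∧ m = 1 + mspd G k Y (W \ Y)} ∧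
    ∀ X' : Finset V, X'.card ≤ k + 1 → mspd G k X' ∅ = 1 := by
  constructor
  · apply le_antisymm
    · -- mspd ≤ sInf RHS
      apply le_sInf
      rintro m ⟨Y, hYsub, hYne, hYcard, hN, rfl⟩
      by_cases htop : mspd G k Y (W \ Y) = ⊤
      · rw [htop]; simp
      · have hne : {m : ℕ∞ | ∃ (s : ℕ) (bags : Fin s → Finset V), m = s ∧
            IsPathDecomp G ↑(Y ∪ (W \ Y)) bags ∧ (∀ i, (bags i).card ≤ k + 1) ∧
            ∃ h : 0 < s, bags ⟨s - 1, Nat.sub_lt h Nat.one_pos⟩ = Y}.Nonempty := by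
          by_contra h
          rw [Set.not_nonempty_iff_eq_empty] at h
          exact htop (by rw [mspd, h, sInf_empty])
        obtain ⟨s, bags, hms, hpd, hwid, hpos, hlastY⟩ := csInf_mem hne
        have happ := mspd_append G k X W Y hgp hYsub hN s bags hpd hwid hpos hlastY
        have heq : mspd G k Y (W \ Y) = (s : ℕ∞) := hms
        rw [heq, add_comm]
        exact happ
    · -- sInf RHS ≤ mspd
      rw [mspd]
      apply le_sInf
      rintro m ⟨s, bags, rfl, hpd, hwid, hpos, hlastX⟩
      exact mspd_extract G k X W hgp hW s bags hpd hwid hpos hlastX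
  · intro X' hX'
    apply le_antisymm
    · apply sInf_le
      refine ⟨1, fun _ => X', Nat.cast_one.symm, ⟨?_, ?_, ?_, ?_⟩, fun _ => hX', Nat.one_pos, rfl⟩
      · intro i v hv; simpa using hv
      · intro v hv; exact ⟨0, by simpa using hv⟩
      · intro v hv w hw _; exact ⟨0, by simpa using hv, by simpa using hw⟩
      · intro v i j l _ _ h _; exact h
    · apply le_sInf
      rintro m ⟨s, bags, rfl, _, _, hpos, _⟩
      exact_mod_cast hpos
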